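/- In the channel selection game, if g_{1,1}^{(1)} > g_{1,1}^{(2)} (player 1's direct gain is larger on channel 1) and g_{2,2}^{(2)} > g_{2,2}^{(1)} (player 2's direct gain is larger on channel 2), then (α₁, α₂) = (1,0) is a pure Nash equilibrium. -/
import Mathlib


open Real Set

/-- Utility of a player with direct gains `gk1 gk2`, cross gains `gi1 gi2`,
own action `a`, opponent action `b`. -/
noncomputable def u (gk1 gk2 gi1 gi2 a b : ℝ) : ℝ :=
  Real.logb 2 (1 + a * gk1 / (1 + b * gi1)) +
  Real.logb 2 (1 + (1 - a) * gk2 / (1 + (1 - b) * gi2))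

lemma logb_mono {x y : ℝ} (hx : 0 < x) (hxy : x ≤ y) :
    Real.logb 2 x ≤ Real.logb 2 y :=
  Real.logb_le_logb_of_le one_lt_two hx hxy

/-- If each player's direct gain is larger on a different channel, using those
different channels is a pure NE of the CS game. -/
theorem cs_opposite_channels_NE
    (g111 g112 g121 g122 g211 g212 g221 g222 : ℝ)
    (h111 : 0 < g111) (h112 : 0 < g112) (h121 : 0 < g121) (h122 : 0 < g122)
    (h211 : 0 < g211) (h212 : 0 < g212) (h221 : 0 < g221) (h222 : 0 < g222)
    (h1 : g112 < g111) (h2 : g221 < g222) :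
    (∀ a1' ∈ ({0, 1} : Set ℝ),
      u g111 g112 g121 g122 a1' 0 ≤ u g111 g112 g121 g122 1 0) ∧
    (∀ a2' ∈ ({0, 1} : Set ℝ),
      u g221 g222 g211 g212 a2' 1 ≤ u g221 g222 g211 g212 0 1) := by
  constructor
  · rintro a (rfl | rfl)
    · simp only [u]
      norm_num
      apply logb_mono
      · positivity
      · have hd : 1 ≤ 1 + g122 := by linarith
        have : g112 / (1 + g122) ≤ g112 := by
          apply div_le_self h112.le hd
        linarith
    · exact le_refl _
  · rintro a (rfl | rfl)
    · exact le_refl _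
    · simp only [u]
      norm_num
      apply logb_mono
      · positivity
      · have hd : 1 ≤ 1 + g211 := by linarith
        have : g221 / (1 + g211) ≤ g221 := by
          apply div_le_self h221.le hd
        linarith
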